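/- Let S = (s_ij) be a real symmetric n×n matrix with all diagonal entries equal to zero and at most one positive eigenvalue, and let i, j, k be pairwise distinct indices such that the i-th row of S is not the zero vector. If s_ij = 0 and s_ik = 0, then s_jk = 0. -/

import Mathlib

open Matrix

lemma quad_eq (n : ℕ) (S : Matrix (Fin n) (Fin n) ℝ) (hS : S.IsHermitian) (x : Fin n → ℝ) :
    x ⬝ᵥ S *ᵥ x = ∑ m, hS.eigenvalues m *
      ((star (hS.eigenvectorUnitary : Matrix (Fin n) (Fin n) ℝ) *ᵥ x) m)^2 := by
  conv_lhs => rw [hS.spectral_theorem]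
  set U := (hS.eigenvectorUnitary : Matrix (Fin n) (Fin n) ℝ)
  have h1 : (U * diagonal (RCLike.ofReal ∘ hS.eigenvalues) * star U) *ᵥ x
      = U *ᵥ (diagonal (RCLike.ofReal ∘ hS.eigenvalues) *ᵥ (star U *ᵥ x)) := by
    rw [← mulVec_mulVec, ← mulVec_mulVec]
  rw [Unitary.conjStarAlgAut_apply, h1, dotProduct_mulVec]
  have h2 : x ᵥ* U = star U *ᵥ x := by
    rw [Matrix.star_eq_conjTranspose, conjTranspose_eq_transpose_of_trivial,
      mulVec_transpose]
  rw [h2]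
  simp [dotProduct, mulVec_diagonal]
  refine Finset.sum_congr rfl fun m _ => by ring

lemma exists_nonpos (n : ℕ) (S : Matrix (Fin n) (Fin n) ℝ) (hS : S.IsHermitian)
    (hpos : Nat.card {i : Fin n // 0 < hS.eigenvalues i} ≤ 1) (u v : Fin n → ℝ) :
    ∃ α β : ℝ, ¬(α = 0 ∧ β = 0) ∧ (α • u + β • v) ⬝ᵥ S *ᵥ (α • u + β • v) ≤ 0 := by
  classical
  have hsub : Subsingleton {i : Fin n // 0 < hS.eigenvalues i} := by
    rw [Nat.card_eq_fintype_card] at hpos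
    exact Fintype.card_le_one_iff_subsingleton.mp hpos
  set W := (star (hS.eigenvectorUnitary : Matrix (Fin n) (Fin n) ℝ)) with hW
  -- sufficient condition for q(x) ≤ 0
  have key : ∀ x : Fin n → ℝ, (∀ m, 0 < hS.eigenvalues m → (W *ᵥ x) m = 0) →
      x ⬝ᵥ S *ᵥ x ≤ 0 := by
    intro x hx
    rw [quad_eq n S hS x]
    apply Finset.sum_nonpos
    intro m _
    by_cases hm : 0 < hS.eigenvalues m
    · rw [hx m hm]; simp
    · push_neg at hm
      exact mul_nonpos_of_nonpos_of_nonneg hm (sq_nonneg _)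
  by_cases hex : ∃ m, 0 < hS.eigenvalues m
  · obtain ⟨m₀, hm₀⟩ := hex
    have huniq : ∀ m, 0 < hS.eigenvalues m → m = m₀ := fun m hm =>
      congrArg Subtype.val (hsub.elim ⟨m, hm⟩ ⟨m₀, hm₀⟩)
    by_cases ha : (W *ᵥ u) m₀ = 0
    · refine ⟨1, 0, by simp, key _ fun m hm => ?_⟩
      rw [huniq m hm]
      simp [mulVec_add, mulVec_smul, ha]
    · refine ⟨(W *ᵥ v) m₀, -((W *ᵥ u) m₀), fun h => ha ?_, key _ fun m hm => ?_⟩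
      · have := h.2; linarith [neg_eq_zero.mp this]
      · rw [huniq m hm]
        simp only [mulVec_add, mulVec_smul, neg_smul, mulVec_neg, Pi.add_apply,
          Pi.smul_apply, Pi.neg_apply, smul_eq_mul]
        ring
  · push_neg at hex
    exact ⟨1, 0, by simp, key _ fun m hm => absurd hm (not_lt.mpr (hex m))⟩

/-- Let `S` be a real symmetric `n × n` matrix with zero diagonal and at most one positive
eigenvalue, and let `i, j, k` be pairwise distinct with the `i`-th row of `S` nonzero.
If `s_ij = 0` and `s_ik = 0`, then `s_jk = 0`. -/
theorem zero_transitive (n : ℕ) (S : Matrix (Fin n) (Fin n) ℝ)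
    (hS : S.IsHermitian) (hdiag : ∀ i, S i i = 0)
    (hpos : Nat.card {i : Fin n // 0 < hS.eigenvalues i} ≤ 1)
    (i j k : Fin n) (hij : i ≠ j) (hik : i ≠ k) (hjk : j ≠ k)
    (hrow : S i ≠ 0) (h1 : S i j = 0) (h2 : S i k = 0) :
    S j k = 0 := by
  classical
  by_contra ha
  obtain ⟨l, hl⟩ : ∃ l, S i l ≠ 0 := Function.ne_iff.mp hrow
  have hsymm : ∀ p q, S p q = S q p := by
    intro p q
    conv_lhs => rw [← hS]
    simp [conjTranspose_apply]
  set a := S j k with ha'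
  set b := S i l with hb'
  set β₀ : ℝ := -(S j l + a * S k l) / b with hβ
  set u : Fin n → ℝ := (Pi.single i 1 : Fin n → ℝ) + b • (Pi.single l 1 : Fin n → ℝ) with hu
  set v : Fin n → ℝ := β₀ • (Pi.single i 1 : Fin n → ℝ) + (Pi.single j 1 : Fin n → ℝ) + a • (Pi.single k 1 : Fin n → ℝ) with hv
  have hSu : ∀ p, (S *ᵥ u) p = S p i + b * S p l := by
    intro p
    simp only [hu, mulVec_add, mulVec_smul, mulVec_single, Pi.add_apply, Pi.smul_apply,
      smul_eq_mul, mul_one, MulOpposite.op_one, one_smul, col_apply]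
  have hSv : ∀ p, (S *ᵥ v) p = β₀ * S p i + S p j + a * S p k := by
    intro p
    simp only [hv, mulVec_add, mulVec_smul, mulVec_single, Pi.add_apply, Pi.smul_apply,
      smul_eq_mul, mul_one, MulOpposite.op_one, one_smul, col_apply]
  have Buu : u ⬝ᵥ S *ᵥ u = 2 * b ^ 2 := by
    rw [hu, add_dotProduct, smul_dotProduct, single_dotProduct, single_dotProduct,
      hSu, hSu, hdiag i, hdiag l, hsymm l i, ← hb']
    simp only [smul_eq_mul]
    ring
  have Buv : u ⬝ᵥ S *ᵥ v = 0 := by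
    rw [hu, add_dotProduct, smul_dotProduct, single_dotProduct, single_dotProduct,
      hSv, hSv, hdiag i, h1, h2, hsymm l i, hsymm l j, hsymm l k, ← hb', hβ]
    simp only [smul_eq_mul]
    field_simp
    ring
  have Bvu : v ⬝ᵥ S *ᵥ u = 0 := by
    rw [hv, add_dotProduct, add_dotProduct, smul_dotProduct, smul_dotProduct,
      single_dotProduct, single_dotProduct, single_dotProduct, hSu, hSu, hSu,
      hdiag i, hsymm j i, hsymm k i, h1, h2, ← hb', hβ]
    simp only [smul_eq_mul]
    field_simp
    ring
  have Bvv : v ⬝ᵥ S *ᵥ v = 2 * a ^ 2 := by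
    rw [hv, add_dotProduct, add_dotProduct, smul_dotProduct, smul_dotProduct,
      single_dotProduct, single_dotProduct, single_dotProduct, hSv, hSv, hSv,
      hdiag i, hdiag j, hdiag k, hsymm j i, hsymm k i, hsymm k j, h1, h2, ← ha']
    simp only [smul_eq_mul]
    ring
  obtain ⟨α, β, hαβ, hle⟩ := exists_nonpos n S hS hpos u v
  have hq : (α • u + β • v) ⬝ᵥ S *ᵥ (α • u + β • v)
      = 2 * α ^ 2 * b ^ 2 + 2 * β ^ 2 * a ^ 2 := by
    simp only [mulVec_add, mulVec_smul, dotProduct_add, dotProduct_smul, add_dotProduct,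
      smul_dotProduct, smul_eq_mul, Buu, Buv, Bvu, Bvv]
    ring
  rw [hq] at hle
  rcases not_and_or.mp hαβ with h | h
  · nlinarith [sq_nonneg α, sq_nonneg β, sq_nonneg a, sq_nonneg b, sq_pos_of_ne_zero h, sq_pos_of_ne_zero hl]
  · nlinarith [sq_nonneg α, sq_nonneg b, sq_pos_of_ne_zero h, sq_pos_of_ne_zero ha]
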